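/- Let π = 2^k be a power of 2, let ℓ ≥ 3 be odd, and let x : Fin ℓ → ℕ be stack heights such that the Nim-sum of all x i is nonzero but (x 0 + π) ^^^ (x 1 + π) ^^^ (Nim-sum of x i for i ≥ 2) = 0. Then x 0 + x 1 + ⋯ + x (ℓ−1) ≥ 4π. -/

import Mathlib

instance : Std.Commutative (fun x y : ℕ => x ^^^ y) := ⟨Nat.xor_comm⟩
instance : Std.Associative (fun x y : ℕ => x ^^^ y) := ⟨Nat.xor_assoc⟩

theorem xor_decomp (x y : ℕ) : x ^^^ y = 2 * (x / 2 ^^^ y / 2) + (x + y) % 2 := by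
  have h2 : (x ^^^ y) / 2 = x / 2 ^^^ y / 2 := by simp [Nat.xor_div_two]
  have h3 : (x ^^^ y) % 2 = (x + y) % 2 := Nat.xor_mod_two_eq
  omega

theorem my_xor_le_add (a b : ℕ) : a ^^^ b ≤ a + b := by
  induction a using Nat.strong_induction_on generalizing b with
  | _ a ih =>
    rcases Nat.eq_zero_or_pos a with h | h
    · simp [h]
    · have := xor_decomp a b
      have := ih (a / 2) (Nat.div_lt_self h one_lt_two) (b / 2)
      omega

theorem fold_xor_le_sum {α : Type*} [DecidableEq α] (s : Finset α) (f : α → ℕ) :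
    s.fold (fun a b : ℕ => a ^^^ b) 0 f ≤ ∑ i ∈ s, f i := by
  induction s using Finset.induction_on with
  | empty => simp
  | insert _ _ h ih =>
    rw [Finset.fold_insert h, Finset.sum_insert h]
    calc _ ≤ _ + _ := my_xor_le_add _ _
    _ ≤ _ := by omega

theorem key_lemma (k : ℕ) : ∀ a b : ℕ,
    a ^^^ b ≠ (a + 2 ^ k) ^^^ (b + 2 ^ k) →
    4 * 2 ^ k ≤ a + b + ((a + 2 ^ k) ^^^ (b + 2 ^ k)) := by
  induction k with
  | zero =>
    intro a b h
    by_cases hab : 4 ≤ a + b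
    · omega
    · have ha : a < 4 := by omega
      have hb : b < 4 := by omega
      interval_cases a <;> interval_cases b <;> revert h <;> decide
  | succ k ih =>
    intro a b h
    have e1 := xor_decomp a b
    have e2 := xor_decomp (a + 2 ^ (k + 1)) (b + 2 ^ (k + 1))
    have d1 : (a + 2 ^ (k + 1)) / 2 = a / 2 + 2 ^ k := by
      have : 2 ^ (k + 1) = 2 * 2 ^ k := by ring
      omega
    have d2 : (b + 2 ^ (k + 1)) / 2 = b / 2 + 2 ^ k := by
      have : 2 ^ (k + 1) = 2 * 2 ^ k := by ring
      omega
    rw [d1, d2] at e2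
    have hne : a / 2 ^^^ b / 2 ≠ (a / 2 + 2 ^ k) ^^^ (b / 2 + 2 ^ k) := by
      intro hcontra
      apply h
      rw [e1, e2, hcontra]
      have : 2 ^ (k + 1) = 2 * 2 ^ k := by ring
      omega
    have := ih (a / 2) (b / 2) hne
    have : 2 ^ (k + 1) = 2 * 2 ^ k := by ring
    omega

/-- If `π = 2 ^ k` is a power of two, `ℓ ≥ 3` is odd, the Nim-sum of the stack
heights `x 0, …, x (ℓ - 1)` is nonzero, but adding `π` to each of the first two
stacks produces Nim-sum zero, then the total number of tokens is at least `4π`. -/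
theorem tokens_ge_four_pi (k ℓ : ℕ) (π : ℕ) (hπ : π = 2 ^ k)
    (hℓ : 3 ≤ ℓ) (hodd : Odd ℓ) (x : Fin ℓ → ℕ)
    (hne : Finset.univ.fold (fun a b : ℕ => a ^^^ b) 0 x ≠ 0)
    (hzero : (x ⟨0, by omega⟩ + π) ^^^ (x ⟨1, by omega⟩ + π) ^^^
      (Finset.univ.filter (fun i : Fin ℓ => 2 ≤ (i : ℕ))).fold
        (fun a b : ℕ => a ^^^ b) 0 x = 0) :
    4 * π ≤ ∑ i, x i := by
  set i0 : Fin ℓ := ⟨0, by omega⟩ with hi0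
  set i1 : Fin ℓ := ⟨1, by omega⟩ with hi1
  set s : Finset (Fin ℓ) := Finset.univ.filter (fun i : Fin ℓ => 2 ≤ (i : ℕ)) with hs
  set R : ℕ := s.fold (fun a b : ℕ => a ^^^ b) 0 x with hR
  have h01 : i0 ≠ i1 := by simp [hi0, hi1, Fin.ext_iff]
  have h0s : i0 ∉ s := by simp [hi0, hs]
  have h1s : i1 ∉ s := by simp [hi1, hs]
  have huniv : (Finset.univ : Finset (Fin ℓ)) = insert i0 (insert i1 s) := by
    ext i
    simp only [Finset.mem_univ, Finset.mem_insert, hs, Finset.mem_filter, true_and, true_iff,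
      hi0, hi1, Fin.ext_iff]
    omega
  have hf : Finset.univ.fold (fun a b : ℕ => a ^^^ b) 0 x = x i0 ^^^ (x i1 ^^^ R) := by
    rw [huniv, Finset.fold_insert (by simp [Finset.mem_insert, h01, h0s]),
      Finset.fold_insert h1s]
  have hsum : ∑ i, x i = x i0 + (x i1 + ∑ i ∈ s, x i) := by
    rw [huniv, Finset.sum_insert (by simp [Finset.mem_insert, h01, h0s]),
      Finset.sum_insert h1s]
  rw [hf] at hne
  -- from hzero : R = (x i0 + π) ^^^ (x i1 + π)
  have hRe : R = (x i0 + π) ^^^ (x i1 + π) := by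
    have := hzero
    rw [Nat.xor_assoc] at this
    have h2 : (x i1 + π) ^^^ R = (x i0 + π) := by
      have := xor_eq_zero_iff.mp this
      exact this.symm
    calc R = (x i1 + π) ^^^ ((x i1 + π) ^^^ R) := (xor_cancel_left _ _).symm
    _ = (x i1 + π) ^^^ (x i0 + π) := by rw [h2]
    _ = (x i0 + π) ^^^ (x i1 + π) := Nat.xor_comm _ _
  have hne2 : x i0 ^^^ x i1 ≠ (x i0 + π) ^^^ (x i1 + π) := by
    intro hcontra
    apply hne
    rw [hRe, ← hcontra, ← Nat.xor_assoc, Nat.xor_self]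
  have hkey : 4 * 2 ^ k ≤ x i0 + x i1 + ((x i0 + 2 ^ k) ^^^ (x i1 + 2 ^ k)) := by
    apply key_lemma
    rw [← hπ]
    exact hne2
  have hRle : R ≤ ∑ i ∈ s, x i := fold_xor_le_sum s x
  rw [hπ]
  rw [hRe, hπ] at hRle
  omega
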